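/- Let M be a boolean R×C matrix, let G_M be its grid embedding, and let G'_M be the mirror image of G_M along the vertical axis with all shortcut vertices removed (its vertices corresponding to a_j and b_k denoted a'_j and b'_k). Let u ∈ {0,1}^R with u_k = 1 for at least one k, and form a graph G by adding, for each k with u_k = 1, an edge (b_k, b'_k) of weight 2(C+1)(R−k). Then for every 1 ≤ j ≤ C: the shortest-path distance between a_j and a'_{C−j+1} in G equals 4R(C+1) − 1 if there exists k with u_k = 1 and M_{k,j} = 1, and equals 4R(C+1) otherwise. (Since all weights are positive integers, subdividing every edge of G into a unit-weight path of the same total length yields an unweighted graph with the same distances.) -/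

import Mathlib

/-- Vertices of the grid embedding: `a j` (top terminals), `b i` (right terminals),
`u i j` (grid intersections), `v i j` (subdivision vertex above `u i j`),
`w i j` (subdivision vertex to the right of `u i j`), `x i j` (shortcut vertices).
Indices are 1-based natural numbers; out-of-range vertices are isolated. -/
inductive GV : Type
  | a (j : ℕ)
  | b (i : ℕ)
  | u (i j : ℕ)
  | v (i j : ℕ)
  | w (i j : ℕ)
  | x (i j : ℕ)
deriving DecidableEq

/-- One-directional edge weights of the grid embedding of a boolean `R × C` matrix `M`;
`⊤` means "no edge". -/
def dirW (R C : ℕ) (M : ℕ → ℕ → Bool) : GV → GV → ℕ∞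
  | GV.a j, GV.v i' j' =>
      if i' = 1 ∧ j' = j ∧ 1 ≤ j ∧ j ≤ C then ((2 * j - 1 : ℕ) : ℕ∞) else ⊤
  | GV.v i j, GV.u i' j' =>
      if i' = i ∧ j' = j ∧ 1 ≤ i ∧ i ≤ R ∧ 1 ≤ j ∧ j ≤ C then 1 else ⊤
  | GV.u i j, GV.v i' j' =>
      if i' = i + 1 ∧ j' = j ∧ 1 ≤ i ∧ i + 1 ≤ R ∧ 1 ≤ j ∧ j ≤ C then
        ((2 * j - 1 : ℕ) : ℕ∞) else ⊤
  | GV.u i j, GV.w i' j' =>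
      if i' = i ∧ j' = j ∧ 1 ≤ i ∧ i ≤ R ∧ 1 ≤ j ∧ j ≤ C then 2 else ⊤
  | GV.w i j, GV.u i' j' =>
      if i' = i ∧ j' = j + 1 ∧ 1 ≤ i ∧ i ≤ R ∧ 1 ≤ j ∧ j + 1 ≤ C then
        ((2 * R - 2 : ℕ) : ℕ∞) else ⊤
  | GV.w i j, GV.b i' =>
      if i' = i ∧ j = C ∧ 1 ≤ i ∧ i ≤ R ∧ 1 ≤ C then ((2 * R - 2 : ℕ) : ℕ∞) else ⊤
  | GV.v i j, GV.x i' j' =>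
      if i' = i ∧ j' = j ∧ M i j = true ∧ 1 ≤ i ∧ i ≤ R ∧ 1 ≤ j ∧ j ≤ C then 1 else ⊤
  | GV.x i j, GV.w i' j' =>
      if i' = i ∧ j' = j ∧ M i j = true ∧ 1 ≤ i ∧ i ≤ R ∧ 1 ≤ j ∧ j ≤ C then 1 else ⊤
  | _, _ => ⊤

/-- Symmetrization of a one-directional weight function. -/
noncomputable def symW {V : Type} (f : V → V → ℕ∞) : V → V → ℕ∞ := fun p q => min (f p q) (f q p)

/-- Edge weights of the grid embedding of a boolean matrix `M`. -/
noncomputable def gridW (R C : ℕ) (M : ℕ → ℕ → Bool) : GV → GV → ℕ∞ := symW (dirW R C M)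

/-- One-directional edge weights of the weighted grid embedding of an `R × C` matrix `M`
with entries in `{0, …, X}`: the grid embedding of the all-ones boolean matrix with every
weight multiplied by `X²`, and the weight of each edge `(v i j, x i j)` increased by `M i j`. -/
def dirWt (R C X : ℕ) (M : ℕ → ℕ → ℕ) : GV → GV → ℕ∞ := fun p q =>
  (X : ℕ∞) ^ 2 * dirW R C (fun _ _ => true) p q +
    (match p, q with
      | GV.v i j, GV.x i' j' => if i' = i ∧ j' = j then (M i j : ℕ∞) else 0
      | _, _ => 0)

/-- Edge weights of the weighted grid embedding of `M`. -/
noncomputable def wgridW (R C X : ℕ) (M : ℕ → ℕ → ℕ) : GV → GV → ℕ∞ := symW (dirWt R C X M)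

/-- Edge weights of the mirrored grid `G'`: the (weighted, scaled by `X²`) grid embedding
with all shortcut vertices removed.  Mirroring is a weight-preserving graph isomorphism, so
the mirrored copy is represented by the same abstract graph. -/
noncomputable def mirW (R C X : ℕ) : GV → GV → ℕ∞ :=
  fun p q => (X : ℕ∞) ^ 2 * gridW R C (fun _ _ => false) p q

/-- Total weight of a walk, given as its list of visited vertices. -/
def cost {V : Type} (W : V → V → ℕ∞) : List V → ℕ∞
  | p :: q :: l => W p q + cost W (q :: l)
  | _ => 0

/-- Shortest-path distance: the least total weight of a walk from `s` to `t`
(`⊤` if there is none; walks through a non-edge have cost `⊤`). -/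
noncomputable def gdist {V : Type} (W : V → V → ℕ∞) (s t : V) : ℕ∞ :=
  sInf {c | ∃ l : List V, l.head? = some s ∧ l.getLast? = some t ∧ cost W l = c}

/-- The unweighted (boolean) joined graph of Statement 10: a copy of the grid embedding
`G_M` (the `inl` copy), a mirrored copy with all shortcut vertices removed (the `inr`
copy), and for each `1 ≤ k ≤ R` with `u k = 1` a joining edge `(b k, b' k)` of weight
`2(C+1)(R−k)`. -/
noncomputable def joinBW (R C : ℕ) (M : ℕ → ℕ → Bool) (u : ℕ → Bool) : GV ⊕ GV → GV ⊕ GV → ℕ∞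
  | Sum.inl p, Sum.inl q => gridW R C M p q
  | Sum.inr p, Sum.inr q => gridW R C (fun _ _ => false) p q
  | Sum.inl (GV.b k), Sum.inr (GV.b k') =>
      if k' = k ∧ 1 ≤ k ∧ k ≤ R ∧ u k = true then ((2 * (C + 1) * (R - k) : ℕ) : ℕ∞) else ⊤
  | Sum.inr (GV.b k'), Sum.inl (GV.b k) =>
      if k' = k ∧ 1 ≤ k ∧ k ≤ R ∧ u k = true then ((2 * (C + 1) * (R - k) : ℕ) : ℕ∞) else ⊤
  | _, _ => ⊤

section Generic
variable {V : Type} (W : V → V → ℕ∞)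

lemma cost_append_cons (xs : List V) (y : V) (ys : List V) :
    cost W (xs ++ y :: ys) = cost W (xs ++ [y]) + cost W (y :: ys) := by
  induction xs with
  | nil => simp [cost]
  | cons x xs ih =>
    cases xs with
    | nil => simp [cost, add_assoc]
    | cons x' xs' =>
      simp only [List.cons_append, cost, List.append_eq] at *
      rw [ih, add_assoc]

lemma cost_concat (xs : List V) (x y : V) (hx : xs.getLast? = some x) :
    cost W (xs ++ [y]) = cost W xs + W x y := by
  induction xs with
  | nil => simp at hx
  | cons z xs ih =>
    cases xs with
    | nil =>
      simp at hx; subst hx; simp [cost]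
    | cons z' xs' =>
      rw [List.getLast?_cons_cons] at hx
      simp only [List.cons_append, cost, List.append_eq] at *
      rw [ih hx, add_assoc]

lemma cost_reverse (hsym : ∀ p q, W p q = W q p) (l : List V) :
    cost W l.reverse = cost W l := by
  induction l with
  | nil => simp
  | cons x l ih =>
    cases l with
    | nil => simp
    | cons y l' =>
      have hy : (y :: l').reverse.getLast? = some y := by
        simp [List.getLast?_reverse]
      rw [List.reverse_cons, cost_concat W _ y x hy, ih, hsym y x]
      simp [cost, add_comm]

lemma cost_map {V' : Type} (W' : V' → V' → ℕ∞) (e : V → V')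
    (hW : ∀ p q, W' (e p) (e q) = W p q) (l : List V) :
    cost W' (l.map e) = cost W l := by
  induction l with
  | nil => simp [cost]
  | cons x l ih =>
    cases l with
    | nil => simp [cost]
    | cons y l' => simp only [List.map, cost] at *; rw [ih, hW]

lemma pot_bound (φ : V → ℤ)
    (hφ : ∀ p q (n : ℕ), W p q = (n : ℕ∞) → φ q ≤ φ p + n) :
    ∀ (l : List V) (s t : V) (n : ℕ), l.head? = some s → l.getLast? = some t →
      cost W l = (n : ℕ∞) → φ t ≤ φ s + n := by
  intro l
  induction l with
  | nil => intro s t n h; simp at h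
  | cons x l ih =>
    intro s t n hs ht hc
    simp at hs; subst hs
    cases l with
    | nil =>
      simp at ht; subst ht
      have : (0:ℤ) ≤ (n:ℤ) := Int.ofNat_nonneg n
      omega
    | cons y l' =>
      rw [List.getLast?_cons_cons] at ht
      simp only [cost] at hc
      cases hW : W x y with
      | top => rw [hW] at hc; simp at hc
      | coe m =>
        rw [hW] at hc
        cases hc2 : cost W (y :: l') with
        | top => rw [hc2] at hc; simp at hc
        | coe m' =>
          rw [hc2] at hc
          have hmm : m + m' = n := by
            have := hc
            push_cast at this
            exact_mod_cast this
          have h1 := hφ x y m hW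
          have h2 := ih y t m' rfl ht hc2
          omega

end Generic

section Generic2
variable {V : Type} {W : V → V → ℕ∞}

lemma gdist_le {s t : V} (l : List V) (h1 : l.head? = some s)
    (h2 : l.getLast? = some t) : gdist W s t ≤ cost W l :=
  sInf_le ⟨l, h1, h2, rfl⟩

lemma le_gdist (φ : V → ℤ)
    (hφ : ∀ p q (n : ℕ), W p q = (n : ℕ∞) → φ q ≤ φ p + n)
    {s t : V} {T : ℕ} (hs : φ s = 0) (ht : (T : ℤ) ≤ φ t) :
    (T : ℕ∞) ≤ gdist W s t := by
  apply le_sInf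
  rintro c ⟨l, h1, h2, rfl⟩
  cases hc : cost W l with
  | top => exact le_top
  | coe n =>
    have := pot_bound W φ hφ l s t n h1 h2 hc
    rw [hs, zero_add] at this
    exact_mod_cast le_trans ht this

end Generic2

section EdgeEval
variable {R C : ℕ} {M : ℕ → ℕ → Bool}

lemma W_av {j' : ℕ} (h1 : 1 ≤ j') (h2 : j' ≤ C) :
    gridW R C M (GV.a j') (GV.v 1 j') = ((2 * j' - 1 : ℕ) : ℕ∞) := by
  simp [gridW, symW, dirW, h1, h2]

lemma W_vu {i j' : ℕ} (hi1 : 1 ≤ i) (hi2 : i ≤ R) (h1 : 1 ≤ j') (h2 : j' ≤ C) :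
    gridW R C M (GV.v i j') (GV.u i j') = 1 := by
  simp [gridW, symW, dirW, hi1, hi2, h1, h2]

lemma W_uv {i j' : ℕ} (hi1 : 1 ≤ i) (hi2 : i + 1 ≤ R) (h1 : 1 ≤ j') (h2 : j' ≤ C) :
    gridW R C M (GV.u i j') (GV.v (i+1) j') = ((2 * j' - 1 : ℕ) : ℕ∞) := by
  simp [gridW, symW, dirW, hi1, hi2, h1, h2]

lemma W_uw {i j' : ℕ} (hi1 : 1 ≤ i) (hi2 : i ≤ R) (h1 : 1 ≤ j') (h2 : j' ≤ C) :
    gridW R C M (GV.u i j') (GV.w i j') = 2 := by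
  simp [gridW, symW, dirW, hi1, hi2, h1, h2]

lemma W_wu {i j' : ℕ} (hi1 : 1 ≤ i) (hi2 : i ≤ R) (h1 : 1 ≤ j') (h2 : j' + 1 ≤ C) :
    gridW R C M (GV.w i j') (GV.u i (j'+1)) = ((2 * R - 2 : ℕ) : ℕ∞) := by
  simp [gridW, symW, dirW, hi1, hi2, h1, h2]

lemma W_wb {i : ℕ} (hi1 : 1 ≤ i) (hi2 : i ≤ R) (hC : 1 ≤ C) :
    gridW R C M (GV.w i C) (GV.b i) = ((2 * R - 2 : ℕ) : ℕ∞) := by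
  simp [gridW, symW, dirW, hi1, hi2, hC]

lemma W_vx {i j' : ℕ} (hM : M i j' = true) (hi1 : 1 ≤ i) (hi2 : i ≤ R)
    (h1 : 1 ≤ j') (h2 : j' ≤ C) :
    gridW R C M (GV.v i j') (GV.x i j') = 1 := by
  simp [gridW, symW, dirW, hM, hi1, hi2, h1, h2]

lemma W_xw {i j' : ℕ} (hM : M i j' = true) (hi1 : 1 ≤ i) (hi2 : i ≤ R)
    (h1 : 1 ≤ j') (h2 : j' ≤ C) :
    gridW R C M (GV.x i j') (GV.w i j') = 1 := by
  simp [gridW, symW, dirW, hM, hi1, hi2, h1, h2]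

lemma gridW_symm (p q : GV) : gridW R C M p q = gridW R C M q p := min_comm _ _

variable {u : ℕ → Bool}

lemma joinBW_symm (p q : GV ⊕ GV) : joinBW R C M u p q = joinBW R C M u q p := by
  rcases p with p | p <;> rcases q with q | q <;>
    cases p <;> cases q <;> simp [joinBW, gridW_symm]

lemma W_join {k : ℕ} (hk1 : 1 ≤ k) (hk2 : k ≤ R) (hu : u k = true) :
    joinBW R C M u (Sum.inl (GV.b k)) (Sum.inr (GV.b k)) =
      ((2 * (C + 1) * (R - k) : ℕ) : ℕ∞) := by
  simp [joinBW, hk1, hk2, hu]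

lemma joinBW_inl (p q : GV) :
    joinBW R C M u (Sum.inl p) (Sum.inl q) = gridW R C M p q := by
  cases p <;> cases q <;> rfl

lemma joinBW_inr (p q : GV) :
    joinBW R C M u (Sum.inr p) (Sum.inr q) = gridW R C (fun _ _ => false) p q := by
  cases p <;> cases q <;> rfl

end EdgeEval

section Potential

/-- base value along/right of column `j` in the left copy -/
def baseL (R j i j' : ℕ) : ℤ := 2*(j:ℤ)*i + 2*(R:ℤ)*((j':ℤ) - j)

def uLf (R j : ℕ) (D : ℕ → ℤ) (i j' : ℕ) : ℤ :=
  if j ≤ j' then baseL R j i j' - (if j < j' then D i else 0)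
  else 2*(j:ℤ) + 2*(j':ℤ)*((i:ℤ)-1) + 2*(R:ℤ)*((j:ℤ)-(j':ℤ))

def vLf (R j : ℕ) (D : ℕ → ℤ) (i j' : ℕ) : ℤ :=
  if j' ≤ j then uLf R j D i j' - 1 else uLf R j D i j'

def wLf (R j : ℕ) (D : ℕ → ℤ) (i j' : ℕ) : ℤ :=
  if j ≤ j' then baseL R j i j' + 2 - D i else uLf R j D i j' - 2

def xLf (R j : ℕ) (D : ℕ → ℤ) (i j' : ℕ) : ℤ :=
  if j' < j then uLf R j D i j' - 1
  else if j' = j then uLf R j D i j' else uLf R j D i j' + 1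

def bLf (R C j : ℕ) (D : ℕ → ℤ) (i : ℕ) : ℤ :=
  2*(j:ℤ)*i + 2*(R:ℤ)*((C:ℤ)-(j:ℤ)+1) - D i

def aLf (R j : ℕ) (D : ℕ → ℤ) (j' : ℕ) : ℤ :=
  if j' = j then 0 else vLf R j D 1 j'

def phL (R C j : ℕ) (D : ℕ → ℤ) : GV → ℤ
  | GV.a j' => aLf R j D j'
  | GV.b i => bLf R C j D i
  | GV.u i j' => uLf R j D i j'
  | GV.v i j' => vLf R j D i j'
  | GV.w i j' => wLf R j D i j'
  | GV.x i j' => xLf R j D i j'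

/-- mirrored column index as an integer -/
def cR (C j : ℕ) : ℤ := (C:ℤ) + 1 - (j:ℤ)

def uRf (R C j i j' : ℕ) : ℤ :=
  if C + 1 ≤ j' + j then 2*(cR C j)*(i:ℤ) + 2*(R:ℤ)*((j':ℤ) - cR C j)
  else 2*(cR C j) + 2*(j':ℤ)*((i:ℤ)-1) + 2*(R:ℤ)*(cR C j - (j':ℤ))

def vRf (R C j i j' : ℕ) : ℤ :=
  if j' + j ≤ C + 1 then uRf R C j i j' - 1 else uRf R C j i j' + 1

def wRf (R C j i j' : ℕ) : ℤ :=
  if C + 1 ≤ j' + j then uRf R C j i j' + 2 else uRf R C j i j' - 2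

def bRf (R C j i : ℕ) : ℤ := 2*(cR C j)*(i:ℤ) + 2*(R:ℤ)*(j:ℤ)

def aRf (R C j j' : ℕ) : ℤ := if j' + j = C + 1 then 0 else vRf R C j 1 j'

def phR (R C j : ℕ) : GV → ℤ
  | GV.a j' => aRf R C j j'
  | GV.b i => bRf R C j i
  | GV.u i j' => uRf R C j i j'
  | GV.v i j' => vRf R C j i j'
  | GV.w i j' => wRf R C j i j'
  | GV.x _ _ => 0

def phiF (R C j : ℕ) (D : ℕ → ℤ) (T : ℤ) : GV ⊕ GV → ℤ
  | Sum.inl p => phL R C j D p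
  | Sum.inr p => T - phR R C j p

end Potential

section Feas
set_option maxHeartbeats 1000000
variable {R C j : ℕ} {M : ℕ → ℕ → Bool} {D : ℕ → ℤ}

lemma dirL_feas (hj1 : 1 ≤ j) (hjC : j ≤ C)
    (hD0 : ∀ i, 0 ≤ D i) (hD1 : ∀ i, D i ≤ 1)
    (hDM : ∀ i, 1 ≤ i → i ≤ R → M i j = true → D i = 1) :
    ∀ p q (n : ℕ), dirW R C M p q = (n : ℕ∞) →
      phL R C j D q ≤ phL R C j D p + n ∧ phL R C j D p ≤ phL R C j D q + n := by
  intro p q n h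
  cases p <;> cases q <;> simp only [dirW] at h <;>
    try (exact absurd h WithTop.top_ne_coe)
  case a.v j0 i' j' =>
    split_ifs at h with hc
    · obtain ⟨rfl, rfl, h1, h2⟩ := hc
      have hn : n = 2*j'-1 := by exact_mod_cast h.symm
      have hnz : (n:ℤ) = 2*(j':ℤ)-1 := by omega
      clear h
      simp only [phL, aLf, vLf, uLf, baseL]
      constructor <;> split_ifs <;> subst_vars <;> first
        | (exfalso; omega)
        | (zify at *; linarith [hD0 1, hD1 1])
    · exact absurd h WithTop.top_ne_coe
  case v.u i jv i' ju =>
    split_ifs at h with hc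
    · obtain ⟨rfl, rfl, hi1, hi2, h1, h2⟩ := hc
      have hn : n = 1 := by exact_mod_cast h.symm
      have hnz : (n:ℤ) = 1 := by omega
      clear h
      simp only [phL, vLf, uLf, baseL]
      constructor <;> split_ifs <;> subst_vars <;> first
        | (exfalso; omega)
        | (zify at *; linarith [hD0 i', hD1 i'])
    · exact absurd h WithTop.top_ne_coe
  case u.v i ju i' jv =>
    split_ifs at h with hc
    · obtain ⟨rfl, rfl, hi1, hi2, h1, h2⟩ := hc
      have hn : n = 2*jv-1 := by exact_mod_cast h.symm
      have hnz : (n:ℤ) = 2*(jv:ℤ)-1 := by omega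
      clear h
      simp only [phL, vLf, uLf, baseL]
      constructor <;> split_ifs <;> subst_vars <;> first
        | (exfalso; omega)
        | (zify at *; linarith [hD0 i, hD1 i, hD0 (i+1), hD1 (i+1)])
    · exact absurd h WithTop.top_ne_coe
  case u.w i ju i' jw =>
    split_ifs at h with hc
    · obtain ⟨rfl, rfl, hi1, hi2, h1, h2⟩ := hc
      have hn : n = 2 := by exact_mod_cast h.symm
      have hnz : (n:ℤ) = 2 := by omega
      clear h
      simp only [phL, wLf, uLf, baseL]
      constructor <;> split_ifs <;> subst_vars <;> first
        | (exfalso; omega)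
        | (zify at *; linarith [hD0 i', hD1 i'])
    · exact absurd h WithTop.top_ne_coe
  case w.u i jw i' ju =>
    split_ifs at h with hc
    · obtain ⟨rfl, rfl, hi1, hi2, h1, h2⟩ := hc
      have hn : n = 2*R-2 := by exact_mod_cast h.symm
      have hnz : (n:ℤ) = 2*(R:ℤ)-2 := by omega
      clear h
      simp only [phL, wLf, uLf, baseL]
      rcases lt_trichotomy j (jw+1) with hb | hb | hb
      · constructor <;> split_ifs <;> subst_vars <;> first
          | (exfalso; omega)
          | (zify at *; linarith [hD0 i', hD1 i'])
      · subst hb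
        constructor <;> split_ifs <;> subst_vars <;> first
          | (exfalso; omega)
          | (zify at *; linarith [hD0 i', hD1 i'])
      · constructor <;> split_ifs <;> subst_vars <;> first
          | (exfalso; omega)
          | (zify at *; linarith [hD0 i', hD1 i'])
    · exact absurd h WithTop.top_ne_coe
  case w.b i jw i' =>
    split_ifs at h with hc
    · obtain ⟨rfl, rfl, hi1, hi2, h1⟩ := hc
      have hn : n = 2*R-2 := by exact_mod_cast h.symm
      have hnz : (n:ℤ) = 2*(R:ℤ)-2 := by omega
      clear h
      simp only [phL, wLf, uLf, bLf, baseL]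
      constructor <;> split_ifs <;> subst_vars <;> first
        | (exfalso; omega)
        | (zify at *; linarith [hD0 i', hD1 i'])
    · exact absurd h WithTop.top_ne_coe
  case v.x i jv i' jx =>
    split_ifs at h with hc
    · obtain ⟨rfl, rfl, hM, hi1, hi2, h1, h2⟩ := hc
      have hn : n = 1 := by exact_mod_cast h.symm
      have hnz : (n:ℤ) = 1 := by omega
      clear h
      by_cases hj : jx = j
      · subst hj
        have hd := hDM i' hi1 hi2 hM
        simp only [phL, vLf, xLf, uLf, baseL]
        constructor <;> split_ifs <;> subst_vars <;> first
        | (exfalso; omega)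
        | (zify at *; linarith [hd])
      · simp only [phL, vLf, xLf, uLf, baseL]
        constructor <;> split_ifs <;> subst_vars <;> first
        | (exfalso; omega)
        | (zify at *; linarith [hD0 i', hD1 i'])
    · exact absurd h WithTop.top_ne_coe
  case x.w i jx i' jw =>
    split_ifs at h with hc
    · obtain ⟨rfl, rfl, hM, hi1, hi2, h1, h2⟩ := hc
      have hn : n = 1 := by exact_mod_cast h.symm
      have hnz : (n:ℤ) = 1 := by omega
      clear h
      by_cases hj : jw = j
      · subst hj
        have hd := hDM i' hi1 hi2 hM
        simp only [phL, wLf, xLf, uLf, baseL]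
        constructor <;> split_ifs <;> subst_vars <;> first
        | (exfalso; omega)
        | (zify at *; linarith [hd])
      · simp only [phL, wLf, xLf, uLf, baseL]
        constructor <;> split_ifs <;> subst_vars <;> first
        | (exfalso; omega)
        | (zify at *; linarith [hD0 i', hD1 i'])
    · exact absurd h WithTop.top_ne_coe

end Feas

section FeasR
set_option maxHeartbeats 1000000
variable {R C j : ℕ}

lemma dirR_feas (hj1 : 1 ≤ j) (hjC : j ≤ C) :
    ∀ p q (n : ℕ), dirW R C (fun _ _ => false) p q = (n : ℕ∞) →
      phR R C j q ≤ phR R C j p + n ∧ phR R C j p ≤ phR R C j q + n := by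
  intro p q n h
  cases p <;> cases q <;> simp only [dirW] at h <;>
    try (exact absurd h WithTop.top_ne_coe)
  case a.v j0 i' j' =>
    split_ifs at h with hc
    · obtain ⟨rfl, rfl, h1, h2⟩ := hc
      have hn : n = 2*j'-1 := by exact_mod_cast h.symm
      have hnz : (n:ℤ) = 2*(j':ℤ)-1 := by omega
      clear h
      simp only [phR, aRf, vRf, uRf, cR]
      constructor <;> split_ifs <;> subst_vars <;> first
        | (exfalso; omega)
        | (zify at *; linarith)
        | (zify at *; simp only [(show (C:ℤ) = (j':ℤ)+(j:ℤ)-1 from by omega)] at *; ring_nf at *; linarith)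
    · exact absurd h WithTop.top_ne_coe
  case v.u i jv i' ju =>
    split_ifs at h with hc
    · obtain ⟨rfl, rfl, hi1, hi2, h1, h2⟩ := hc
      have hn : n = 1 := by exact_mod_cast h.symm
      have hnz : (n:ℤ) = 1 := by omega
      clear h
      simp only [phR, vRf, uRf, cR]
      constructor <;> split_ifs <;> subst_vars <;> first
        | (exfalso; omega)
        | (zify at *; linarith)
        | (zify at *; simp only [(show (C:ℤ) = (ju:ℤ)+(j:ℤ)-1 from by omega)] at *; ring_nf at *; linarith)
    · exact absurd h WithTop.top_ne_coe
  case u.v i ju i' jv =>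
    split_ifs at h with hc
    · obtain ⟨rfl, rfl, hi1, hi2, h1, h2⟩ := hc
      have hn : n = 2*jv-1 := by exact_mod_cast h.symm
      have hnz : (n:ℤ) = 2*(jv:ℤ)-1 := by omega
      clear h
      simp only [phR, vRf, uRf, cR]
      constructor <;> split_ifs <;> subst_vars <;> first
        | (exfalso; omega)
        | (zify at *; linarith)
        | (zify at *; simp only [(show (C:ℤ) = (jv:ℤ)+(j:ℤ)-1 from by omega)] at *; ring_nf at *; linarith)
    · exact absurd h WithTop.top_ne_coe
  case u.w i ju i' jw =>
    split_ifs at h with hc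
    · obtain ⟨rfl, rfl, hi1, hi2, h1, h2⟩ := hc
      have hn : n = 2 := by exact_mod_cast h.symm
      have hnz : (n:ℤ) = 2 := by omega
      clear h
      simp only [phR, wRf, uRf, cR]
      constructor <;> split_ifs <;> subst_vars <;> first
        | (exfalso; omega)
        | (zify at *; linarith)
        | (zify at *; simp only [(show (C:ℤ) = (jw:ℤ)+(j:ℤ)-1 from by omega)] at *; ring_nf at *; linarith)
    · exact absurd h WithTop.top_ne_coe
  case w.u i jw i' ju =>
    split_ifs at h with hc
    · obtain ⟨rfl, rfl, hi1, hi2, h1, h2⟩ := hc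
      have hn : n = 2*R-2 := by exact_mod_cast h.symm
      have hnz : (n:ℤ) = 2*(R:ℤ)-2 := by omega
      clear h
      simp only [phR, wRf, uRf, cR]
      rcases lt_trichotomy (C+1) (jw+1+j) with hb | hb | hb
      · constructor <;> split_ifs <;> subst_vars <;> first
          | (exfalso; omega)
          | (zify at *; linarith)
      · constructor <;> split_ifs <;> subst_vars <;> first
          | (exfalso; omega)
          | (zify at *; (try rw [(by omega : (C:ℤ) = (jw:ℤ) + (j:ℤ))] at *); linarith)
      · constructor <;> split_ifs <;> subst_vars <;> first
          | (exfalso; omega)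
          | (zify at *; linarith)
    · exact absurd h WithTop.top_ne_coe
  case w.b i jw i' =>
    split_ifs at h with hc
    · obtain ⟨rfl, rfl, hi1, hi2, h1⟩ := hc
      have hn : n = 2*R-2 := by exact_mod_cast h.symm
      have hnz : (n:ℤ) = 2*(R:ℤ)-2 := by omega
      clear h
      simp only [phR, wRf, uRf, bRf, cR]
      constructor <;> split_ifs <;> subst_vars <;> first
        | (exfalso; omega)
        | (zify at *; linarith)
        | (zify at *; simp only [(show (C:ℤ) = (C:ℤ)+(j:ℤ)-1 from by omega)] at *; ring_nf at *; linarith)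
    · exact absurd h WithTop.top_ne_coe
  case v.x i jv i' jx =>
    rw [if_neg (by simp)] at h
    exact absurd h WithTop.top_ne_coe
  case x.w i jx i' jw =>
    rw [if_neg (by simp)] at h
    exact absurd h WithTop.top_ne_coe

end FeasR

section FeasJ
set_option maxHeartbeats 1000000
variable {R C j : ℕ} {M : ℕ → ℕ → Bool} {u : ℕ → Bool} {D : ℕ → ℤ} {T : ℤ}

lemma join_feas (hj1 : 1 ≤ j) (hjC : j ≤ C)
    (hD0 : ∀ i, 0 ≤ D i) (hD1 : ∀ i, D i ≤ 1)
    (hDM : ∀ i, 1 ≤ i → i ≤ R → M i j = true → D i = 1)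
    (hDjoin : ∀ i, 1 ≤ i → i ≤ R → u i = true → T + D i = 4*(R:ℤ)*((C:ℤ)+1)) :
    ∀ p q (n : ℕ), joinBW R C M u p q = (n : ℕ∞) →
      phiF R C j D T q ≤ phiF R C j D T p + n := by
  rintro (p | p) (q | q) n h
  · rw [joinBW_inl] at h
    simp only [phiF]
    rcases min_cases (dirW R C M p q) (dirW R C M q p) with ⟨he, _⟩ | ⟨he, _⟩ <;>
      rw [gridW, symW, he] at h
    · exact (dirL_feas hj1 hjC hD0 hD1 hDM p q n h).1
    · exact (dirL_feas hj1 hjC hD0 hD1 hDM q p n h).2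
  · -- inl to inr : only b-b join edges
    cases p <;> cases q <;> simp only [joinBW] at h <;>
      try (exact absurd h WithTop.top_ne_coe)
    case b.b k k' =>
      split_ifs at h with hc
      · obtain ⟨rfl, hk1, hk2, huk⟩ := hc
        have hn : n = 2*(C+1)*(R-k') := by exact_mod_cast h.symm
        have hnz : (n:ℤ) = 2*((C:ℤ)+1)*((R:ℤ)-(k':ℤ)) := by
          have hk2' := hk2; zify [hk2] at hn; linarith [hn]
        clear h
        have hj := hDjoin k' hk1 hk2 huk
        simp only [phiF, phL, phR, bLf, bRf, cR]
        zify at *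
        nlinarith [hj, hnz]
      · exact absurd h WithTop.top_ne_coe
  · -- inr to inl
    cases p <;> cases q <;> simp only [joinBW] at h <;>
      try (exact absurd h WithTop.top_ne_coe)
    case b.b k' k =>
      split_ifs at h with hc
      · obtain ⟨rfl, hk1, hk2, huk⟩ := hc
        have hn : n = 2*(C+1)*(R-k') := by exact_mod_cast h.symm
        have hnz : (n:ℤ) = 2*((C:ℤ)+1)*((R:ℤ)-(k':ℤ)) := by
          have hk2' := hk2; zify [hk2] at hn; linarith [hn]
        clear h
        have hj := hDjoin k' hk1 hk2 huk
        simp only [phiF, phL, phR, bLf, bRf, cR]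
        zify at *
        nlinarith [hj, hnz]
      · exact absurd h WithTop.top_ne_coe
  · rw [joinBW_inr] at h
    simp only [phiF]
    rcases min_cases (dirW R C (fun _ _ => false) p q)
        (dirW R C (fun _ _ => false) q p) with ⟨he, _⟩ | ⟨he, _⟩ <;>
      rw [gridW, symW, he] at h
    · have := (dirR_feas (j := j) hj1 hjC p q n h).2
      linarith
    · have := (dirR_feas (j := j) hj1 hjC q p n h).1
      linarith

end FeasJ

section Walk

lemma cost_cons {V : Type} (W : V → V → ℕ∞) (x : V) (l : List V) (y : V)
    (hy : l.head? = some y) : cost W (x :: l) = W x y + cost W l := by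
  cases l with
  | nil => simp at hy
  | cons z l => simp at hy; subst hy; rfl

lemma cast_arith1 (a b : ℕ) : ((a:ℕ∞)) + (1 + (b:ℕ∞)) = ((a + 1 + b : ℕ):ℕ∞) := by
  push_cast; ring

lemma cast_arith2 (a b : ℕ) : ((a:ℕ∞)) + (2 + (b:ℕ∞)) = ((a + 2 + b : ℕ):ℕ∞) := by
  push_cast; ring

/-- column descent: `[v i j, u i j, v (i+1) j, u (i+1) j, …]` (n cells, rows i..i+n-1) -/
def dcol (j : ℕ) : ℕ → ℕ → List GV
  | _, 0 => []
  | i, n+1 => GV.v i j :: GV.u i j :: dcol j (i+1) n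

/-- row run to the terminal: starts at `w i (C-n)`, alternates to `b i`. -/
def rrow (C i : ℕ) : ℕ → List GV
  | 0 => [GV.w i C, GV.b i]
  | n+1 => GV.w i (C-(n+1)) :: GV.u i (C-n) :: rrow C i n

variable {R C : ℕ} {M : ℕ → ℕ → Bool}

lemma dcol_cost (j : ℕ) (hj1 : 1 ≤ j) (hjC : j ≤ C) :
    ∀ (n i : ℕ), 1 ≤ i → i + n ≤ R →
    cost (gridW R C M) (GV.u i j :: dcol j (i+1) n) = ((2*j*n : ℕ) : ℕ∞) := by
  intro n
  induction n with
  | zero => intro i _ _; simp [dcol, cost]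
  | succ n ih =>
    intro i hi1 hin
    simp only [dcol, cost]
    rw [W_uv hi1 (by omega) hj1 hjC, W_vu (by omega) (by omega) hj1 hjC,
      ih (i+1) (by omega) (by omega), cast_arith1]
    congr 1
    rw [Nat.mul_succ]
    generalize 2*j*n = t
    omega

lemma a_dcol_cost (j : ℕ) (hj1 : 1 ≤ j) (hjC : j ≤ C) (n : ℕ) (hn : n ≤ R) :
    cost (gridW R C M) (GV.a j :: dcol j 1 n) = ((2*j*n : ℕ) : ℕ∞) := by
  cases n with
  | zero => simp [dcol, cost]
  | succ n =>
    simp only [dcol, cost]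
    rw [W_av hj1 hjC, W_vu (by omega) (by omega) hj1 hjC,
      dcol_cost j hj1 hjC n 1 (by omega) (by omega), cast_arith1]
    congr 1
    rw [Nat.mul_succ]
    generalize 2*j*n = t
    omega

lemma dcol_getLast (j : ℕ) : ∀ (n i : ℕ) (h : GV), 1 ≤ n →
    (h :: dcol j i n).getLast? = some (GV.u (i+n-1) j) := by
  intro n
  induction n with
  | zero => omega
  | succ n ih =>
    intro i h _
    cases n with
    | zero => simp [dcol]
    | succ m =>
      rw [show dcol j i (m+1+1) = GV.v i j :: GV.u i j :: dcol j (i+1) (m+1) from rfl]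
      rw [List.getLast?_cons_cons, List.getLast?_cons_cons,
        ih (i+1) (GV.u i j) (by omega)]
      have : i + 1 + (m+1) - 1 = i + (m+1+1) - 1 := by omega
      rw [this]

lemma rrow_head {C : ℕ} (i n : ℕ) : (rrow C i n).head? = some (GV.w i (C-n)) := by
  cases n <;> simp [rrow]

lemma rrow_cost (i : ℕ) (hi1 : 1 ≤ i) (hiR : i ≤ R) (hC : 1 ≤ C) :
    ∀ n, n + 1 ≤ C →
    cost (gridW R C M) (rrow C i n) = ((2*R - 2 + 2*R*n : ℕ) : ℕ∞) := by
  intro n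
  induction n with
  | zero =>
    intro _
    simp only [rrow, cost]
    rw [W_wb hi1 hiR hC]
    simp
  | succ n ih =>
    intro hn
    simp only [rrow, cost]
    have h1 : (1:ℕ) ≤ C - (n+1) := by omega
    have h2 : C - (n+1) + 1 = C - n := by omega
    have h3 : C - (n+1) + 1 ≤ C := by omega
    have hwu := W_wu (M := M) (R := R) hi1 hiR h1 h3
    rw [h2] at hwu
    rw [hwu]
    have h4 : (1:ℕ) ≤ C - n := by omega
    have h5 : C - n ≤ C := by omega
    rw [cost_cons _ _ _ _ (rrow_head i n), W_uw hi1 hiR h4 h5, ih (by omega), cast_arith2]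
    congr 1
    rw [Nat.mul_succ]
    generalize 2*R*n = t
    omega

lemma rrow_getLast (i : ℕ) : ∀ n, (rrow C i n).getLast? = some (GV.b i) := by
  intro n
  induction n with
  | zero => simp [rrow]
  | succ n ih =>
    cases n with
    | zero => simp [rrow]
    | succ m =>
      simp only [rrow] at ih ⊢
      rw [List.getLast?_cons_cons, List.getLast?_cons_cons]
      exact ih

end Walk

section Walk2
variable {R C : ℕ} {M : ℕ → ℕ → Bool}

lemma cost_append {V : Type} (W : V → V → ℕ∞) (xs ys : List V) (y : V)
    (hy : ys.head? = some y) :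
    cost W (xs ++ ys) = cost W (xs ++ [y]) + cost W ys := by
  cases ys with
  | nil => simp at hy
  | cons z ys' => simp at hy; subst hy; exact cost_append_cons W xs _ ys'

lemma a_dcol_v_cost (j k : ℕ) (hj1 : 1 ≤ j) (hjC : j ≤ C) (hk1 : 1 ≤ k) (hk2 : k ≤ R) :
    cost (gridW R C M) ((GV.a j :: dcol j 1 (k-1)) ++ [GV.v k j]) =
      ((2*j*k - 1 : ℕ) : ℕ∞) := by
  cases k with
  | zero => omega
  | succ m =>
    cases m with
    | zero =>
      simp only [dcol, cost, List.cons_append, List.nil_append, Nat.zero_add, Nat.sub_self]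
      rw [W_av hj1 hjC]
      simp only [cost, add_zero]
      congr 1
      omega
    | succ t =>
      have hm1 : 1 ≤ t + 1 := by omega
      simp only [Nat.succ_sub_one]
      rw [cost_concat _ _ (GV.u (t+1) j) _ (by
        have := dcol_getLast j (t+1) 1 (GV.a j) hm1
        rwa [show 1 + (t+1) - 1 = t + 1 by omega] at this)]
      rw [a_dcol_cost j hj1 hjC (t+1) (by omega)]
      rw [W_uv (i := t+1) (by omega) (by omega) hj1 hjC]
      rw [← Nat.cast_add]
      congr 1
      have h2j : 1 ≤ 2*j := by omega
      conv_rhs => rw [Nat.mul_succ]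
      generalize 2*j*(t+1) = s
      omega

lemma a_dcol_w_cost (j k : ℕ) (hj1 : 1 ≤ j) (hjC : j ≤ C) (hk1 : 1 ≤ k) (hk2 : k ≤ R) :
    cost (gridW R C M) ((GV.a j :: dcol j 1 k) ++ [GV.w k j]) =
      ((2*j*k + 2 : ℕ) : ℕ∞) := by
  rw [cost_concat _ _ (GV.u k j) _ (by
      have := dcol_getLast j k 1 (GV.a j) hk1
      rwa [show 1 + k - 1 = k by omega] at this)]
  rw [a_dcol_cost j hj1 hjC k hk2, W_uw hk1 hk2 hj1 hjC]
  rw [show (2 : ℕ∞) = ((2:ℕ) : ℕ∞) from rfl, ← Nat.cast_add]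

/-- cost of the straight walk from `a j` to `b k` (no shortcut). -/
lemma straight_cost (j k : ℕ) (hj1 : 1 ≤ j) (hjC : j ≤ C) (hk1 : 1 ≤ k) (hk2 : k ≤ R) :
    cost (gridW R C M) ((GV.a j :: dcol j 1 k) ++ rrow C k (C-j)) =
      ((2*j*k + 2*R*(C-j+1) : ℕ) : ℕ∞) := by
  have hhead : (rrow C k (C-j)).head? = some (GV.w k j) := by
    have := rrow_head (C := C) k (C-j)
    rwa [show C - (C-j) = j by omega] at this
  rw [cost_append _ _ _ _ hhead, a_dcol_w_cost j k hj1 hjC hk1 hk2,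
    rrow_cost k hk1 hk2 (by omega) (C-j) (by omega), ← Nat.cast_add]
  congr 1
  have e : 2*R*(C-j+1) = 2*R*(C-j) + 2*R := by rw [Nat.mul_succ]
  rw [e]
  generalize 2*R*(C-j) = s
  generalize 2*j*k = s'
  omega

/-- cost of the shortcut walk from `a j` to `b k`. -/
lemma shortcut_cost (j k : ℕ) (hj1 : 1 ≤ j) (hjC : j ≤ C) (hk1 : 1 ≤ k) (hk2 : k ≤ R)
    (hM : M k j = true) :
    cost (gridW R C M)
      ((GV.a j :: dcol j 1 (k-1)) ++ GV.v k j :: GV.x k j :: rrow C k (C-j)) =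
      ((2*j*k + 2*R*(C-j+1) - 1 : ℕ) : ℕ∞) := by
  have hhead : (rrow C k (C-j)).head? = some (GV.w k j) := by
    have := rrow_head (C := C) k (C-j)
    rwa [show C - (C-j) = j by omega] at this
  rw [cost_append_cons, a_dcol_v_cost j k hj1 hjC hk1 hk2]
  rw [show cost (gridW R C M) (GV.v k j :: GV.x k j :: rrow C k (C-j)) =
      gridW R C M (GV.v k j) (GV.x k j) + cost (gridW R C M) (GV.x k j :: rrow C k (C-j))
      from rfl]
  rw [cost_cons _ _ _ _ hhead, W_vx hM hk1 hk2 hj1 hjC, W_xw hM hk1 hk2 hj1 hjC,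
    rrow_cost k hk1 hk2 (by omega) (C-j) (by omega)]
  rw [show (1:ℕ∞) + (1 + ((2*R-2+2*R*(C-j) : ℕ):ℕ∞)) = ((1+(1+(2*R-2+2*R*(C-j))) : ℕ):ℕ∞)
      from by push_cast; ring, ← Nat.cast_add]
  congr 1
  have e : 2*R*(C-j+1) = 2*R*(C-j) + 2*R := by rw [Nat.mul_succ]
  rw [e]
  generalize 2*R*(C-j) = s
  generalize hjk : 2*j*k = s'
  have : 2 ≤ s' := by
    rw [← hjk]
    calc 2 = 2*1*1 := by ring
    _ ≤ 2*j*k := by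
        apply Nat.mul_le_mul
        apply Nat.mul_le_mul_left
        exact hj1
        exact hk1
  omega

lemma walk_heads (L : List GV) (l2 : List (GV ⊕ GV)) (p : GV) (h : L.head? = some p) :
    (L.map Sum.inl ++ (l2 : List (GV ⊕ GV))).head? = some (Sum.inl p) := by
  cases L with
  | nil => simp at h
  | cons z l => simp at h; subst h; simp

end Walk2

section Walk3
set_option maxHeartbeats 1000000
variable {R C j k : ℕ} {M : ℕ → ℕ → Bool} {u : ℕ → Bool}

lemma rrow_ne_nil (C i n : ℕ) : rrow C i n ≠ [] := by
  cases n <;> simp [rrow]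

lemma walk_ub (hj1 : 1 ≤ j) (hjC : j ≤ C)
    (hk1 : 1 ≤ k) (hk2 : k ≤ R) (huk : u k = true)
    (L : List GV) (nL : ℕ)
    (hhead : L.head? = some (GV.a j)) (hlast : L.getLast? = some (GV.b k))
    (hLne : L ≠ [])
    (hcost : cost (gridW R C M) L = (nL : ℕ∞)) :
    gdist (joinBW R C M u) (Sum.inl (GV.a j)) (Sum.inr (GV.a (C-j+1))) ≤
      ((nL + 2*(C+1)*(R-k) + (2*(C-j+1)*k + 2*R*j) : ℕ) : ℕ∞) := by
  set c' := C - j + 1 with hc'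
  have hc1 : 1 ≤ c' := by omega
  have hcC : c' ≤ C := by omega
  -- the mirrored-side walk, from a' c' to b' k, then reversed
  set Rfwd : List GV := (GV.a c' :: dcol c' 1 k) ++ rrow C k (C-c') with hRfwd
  have hRfwd_cost : cost (gridW R C (fun _ _ => false)) Rfwd =
      ((2*c'*k + 2*R*(C-c'+1) : ℕ) : ℕ∞) :=
    straight_cost c' k hc1 hcC hk1 hk2
  have hRfwd_last : Rfwd.getLast? = some (GV.b k) := by
    rw [hRfwd, List.getLast?_append_of_ne_nil _ (rrow_ne_nil C k (C-c'))]
    exact rrow_getLast k (C-c')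
  have hRfwd_head : Rfwd.head? = some (GV.a c') := by simp [hRfwd]
  -- full walk
  set Fw : List (GV ⊕ GV) := (L.map Sum.inl) ++ (Rfwd.reverse.map Sum.inr) with hFw
  have hFh : Fw.head? = some (Sum.inl (GV.a j)) := walk_heads L _ _ hhead
  have hFl : Fw.getLast? = some (Sum.inr (GV.a c')) := by
    rw [hFw, List.getLast?_append_of_ne_nil _ (by
      simp [List.map_eq_nil_iff]
      intro hcon
      rw [hcon] at hRfwd_head
      simp at hRfwd_head)]
    rw [List.getLast?_map, List.getLast?_reverse, hRfwd_head]
    rfl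
  have hmapl_last : (L.map (Sum.inl : GV → GV ⊕ GV)).getLast? = some (Sum.inl (GV.b k)) := by
    rw [List.getLast?_map, hlast]; rfl
  have hmapr_head : (Rfwd.reverse.map (Sum.inr : GV → GV ⊕ GV)).head? = some (Sum.inr (GV.b k)) := by
    rw [List.head?_map, List.head?_reverse, hRfwd_last]; rfl
  have hcost_full : cost (joinBW R C M u) Fw =
      ((nL + 2*(C+1)*(R-k) + (2*c'*k + 2*R*(C-c'+1)) : ℕ) : ℕ∞) := by
    rw [hFw, cost_append _ _ _ _ hmapr_head,
      cost_concat _ _ _ _ hmapl_last,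
      cost_map _ _ Sum.inl (fun p q => joinBW_inl p q) L,
      cost_map _ _ Sum.inr (fun p q => joinBW_inr p q) Rfwd.reverse,
      cost_reverse _ (fun p q => gridW_symm p q) Rfwd,
      hcost, hRfwd_cost, W_join hk1 hk2 huk]
    push_cast
    ring
  have := gdist_le (W := joinBW R C M u) Fw hFh hFl
  rw [hcost_full] at this
  rwa [show C - c' + 1 = j by omega] at this

end Walk3

section Main
set_option maxHeartbeats 1000000

theorem joinB_dist' (R C : ℕ) (hR : 1 ≤ R) (hC : 1 ≤ C)
    (M : ℕ → ℕ → Bool) (u : ℕ → Bool) (hu : ∃ k, 1 ≤ k ∧ k ≤ R ∧ u k = true)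
    (j : ℕ) (hj1 : 1 ≤ j) (hjC : j ≤ C) :
    ((∃ k, 1 ≤ k ∧ k ≤ R ∧ u k = true ∧ M k j = true) →
      gdist (joinBW R C M u) (Sum.inl (GV.a j)) (Sum.inr (GV.a (C - j + 1))) =
        ((4 * R * (C + 1) - 1 : ℕ) : ℕ∞)) ∧
    ((¬ ∃ k, 1 ≤ k ∧ k ≤ R ∧ u k = true ∧ M k j = true) →
      gdist (joinBW R C M u) (Sum.inl (GV.a j)) (Sum.inr (GV.a (C - j + 1))) =
        ((4 * R * (C + 1) : ℕ) : ℕ∞)) := by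
  have hT1 : 1 ≤ 4*R*(C+1) := by nlinarith
  constructor
  · rintro ⟨k, hk1, hk2, huk, hMk⟩
    have hone : 1 ≤ 2*j*k + 2*R*(C-j+1) := by nlinarith
    apply le_antisymm
    · -- upper bound via shortcut walk
      have hL := shortcut_cost (R := R) (C := C) (M := M) j k hj1 hjC hk1 hk2 hMk
      have hub := walk_ub hj1 hjC hk1 hk2 huk
        ((GV.a j :: dcol j 1 (k-1)) ++ GV.v k j :: GV.x k j :: rrow C k (C-j))
        (2*j*k + 2*R*(C-j+1) - 1)
        (by simp) 
        (by
          rw [List.getLast?_append_of_ne_nil _ (by simp), List.getLast?_cons_cons,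
            show GV.x k j :: rrow C k (C-j) = [GV.x k j] ++ rrow C k (C-j) from rfl,
            List.getLast?_append_of_ne_nil _ (rrow_ne_nil C k (C-j))]
          exact rrow_getLast k (C-j))
        (by simp) hL
      have harith : 2*j*k + 2*R*(C-j+1) - 1 + 2*(C+1)*(R-k) + (2*(C-j+1)*k + 2*R*j)
          = 4*R*(C+1) - 1 := by
        zify [hjC, hk2, hone, hT1]
        ring
      rwa [harith] at hub
    · -- lower bound via potential
      apply le_gdist (phiF R C j (fun _ => 1) (4*(R:ℤ)*((C:ℤ)+1) - 1))
      · exact join_feas hj1 hjC (fun _ => by norm_num) (fun _ => le_refl 1)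
          (fun _ _ _ _ => rfl) (fun i _ _ _ => by ring)
      · simp [phiF, phL, aLf]
      · have hcnd : C - j + 1 + j = C + 1 := by omega
        simp only [phiF, phR, aRf, if_pos hcnd, sub_zero]
        rw [Nat.cast_sub hT1]
        push_cast
        linarith
  · rintro hno
    obtain ⟨k, hk1, hk2, huk⟩ := hu
    apply le_antisymm
    · have hL := straight_cost (R := R) (C := C) (M := M) j k hj1 hjC hk1 hk2
      have hub := walk_ub hj1 hjC hk1 hk2 huk
        ((GV.a j :: dcol j 1 k) ++ rrow C k (C-j))
        (2*j*k + 2*R*(C-j+1))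
        (by simp)
        (by
          rw [List.getLast?_append_of_ne_nil _ (rrow_ne_nil C k (C-j))]
          exact rrow_getLast k (C-j))
        (by simp) hL
      have harith : 2*j*k + 2*R*(C-j+1) + 2*(C+1)*(R-k) + (2*(C-j+1)*k + 2*R*j)
          = 4*R*(C+1) := by
        zify [hjC, hk2]
        ring
      rwa [harith] at hub
    · apply le_gdist (phiF R C j (fun i => if u i then 0 else 1) (4*(R:ℤ)*((C:ℤ)+1)))
      · refine join_feas hj1 hjC (fun i => ?_) (fun i => ?_) (fun i hi1 hi2 hMi => ?_)
          (fun i hi1 hi2 hui => ?_)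
        · split_ifs <;> norm_num
        · split_ifs <;> norm_num
        · have hui : u i = false := by
            by_contra hcon
            exact hno ⟨i, hi1, hi2, by simpa using hcon, hMi⟩
          simp [hui]
        · simp [hui]
      · simp [phiF, phL, aLf]
      · have hcnd : C - j + 1 + j = C + 1 := by omega
        simp only [phiF, phR, aRf, if_pos hcnd, sub_zero]
        push_cast
        linarith

end Main


/-- the unweighted reduction step.  If `u k = 1` for at least one
`1 ≤ k ≤ R`, then for every `1 ≤ j ≤ C` the distance between `a j` and `a' (C−j+1)` in
the joined graph is `4R(C+1) − 1` if some `k` has `u k = 1` and `M k j = 1`, and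
`4R(C+1)` otherwise. -/
theorem joinB_dist (R C : ℕ) (hR : 1 ≤ R) (hC : 1 ≤ C)
    (M : ℕ → ℕ → Bool) (u : ℕ → Bool) (hu : ∃ k, 1 ≤ k ∧ k ≤ R ∧ u k = true)
    (j : ℕ) (hj1 : 1 ≤ j) (hjC : j ≤ C) :
    ((∃ k, 1 ≤ k ∧ k ≤ R ∧ u k = true ∧ M k j = true) →
      gdist (joinBW R C M u) (Sum.inl (GV.a j)) (Sum.inr (GV.a (C - j + 1))) =
        ((4 * R * (C + 1) - 1 : ℕ) : ℕ∞)) ∧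
    ((¬ ∃ k, 1 ≤ k ∧ k ≤ R ∧ u k = true ∧ M k j = true) →
      gdist (joinBW R C M u) (Sum.inl (GV.a j)) (Sum.inr (GV.a (C - j + 1))) =
        ((4 * R * (C + 1) : ℕ) : ℕ∞)) := by
  exact joinB_dist' R C hR hC M u hu j hj1 hjC
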